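/- For t ≥ s > 0, the maximum of |det(A)| over all n×n upper Hessenberg matrices A with subdiagonal entries fixed at s and upper-triangular entries (entries on or above the diagonal) in the interval [0,t] equals M_n, where M_1 = t, M_2 = t², and M_n = t·M_{n−1} + s²·M_{n−2} for n ≥ 3. -/
import Mathlib


/-- `A` is an `n×n` upper Hessenberg matrix with subdiagonal entries `s`
and upper-triangular entries in `[0,t]`. -/
def IsUpperHessenbergIcc (s t : ℝ) {n : ℕ} (A : Matrix (Fin n) (Fin n) ℝ) : Prop :=
  (∀ i j : Fin n, (i : ℕ) = (j : ℕ) + 1 → A i j = s) ∧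
  (∀ i j : Fin n, (j : ℕ) + 1 < (i : ℕ) → A i j = 0) ∧
  (∀ i j : Fin n, (i : ℕ) ≤ (j : ℕ) → A i j ∈ Set.Icc (0 : ℝ) t)

/-- `M 1 = t`, `M 2 = t²`, `M n = t·M (n-1) + s²·M (n-2)`. -/
def seqM (s t : ℝ) : ℕ → ℝ
  | 0 => 1
  | 1 => t
  | 2 => t ^ 2
  | (n + 3) => t * seqM s t (n + 2) + s ^ 2 * seqM s t (n + 1)

namespace HessAux

noncomputable def trailDet {n : ℕ} (A : Matrix (Fin n) (Fin n) ℝ) (q : ℕ) : ℝ :=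
  if h : q ≤ n then
    (Matrix.of fun i j : Fin q => A ⟨n - q + i.1, by omega⟩ ⟨n - q + j.1, by omega⟩).det
  else 0

@[simp] lemma trailDet_zero {n : ℕ} (A : Matrix (Fin n) (Fin n) ℝ) : trailDet A 0 = 1 := by
  rw [trailDet, dif_pos (Nat.zero_le n)]
  exact Matrix.det_isEmpty

lemma trailDet_self {n : ℕ} (A : Matrix (Fin n) (Fin n) ℝ) : trailDet A n = A.det := by
  rw [trailDet, dif_pos le_rfl]
  congr 1
  apply Matrix.ext
  intro i j
  rw [Matrix.of_apply]
  congr 1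
  · exact Fin.ext (by simp)
  · exact Fin.ext (by simp)

lemma coe_succAbove_one {m : ℕ} (i : Fin (m+1)) :
    (((1 : Fin (m+2)).succAbove i) : ℕ) = if (i:ℕ) = 0 then 0 else (i:ℕ)+1 := by
  rw [Fin.succAbove]
  split <;> simp_all [Fin.lt_def]

lemma det_expand (s t : ℝ) : ∀ {m : ℕ} (B : Matrix (Fin (m+1)) (Fin (m+1)) ℝ),
    IsUpperHessenbergIcc s t B →
    B.det = ∑ j : Fin (m+1), (-s)^(j:ℕ) * B 0 j * trailDet B (m - (j:ℕ))
  | 0, B, hB => by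
    rw [Matrix.det_fin_one, Fin.sum_univ_one]
    simp
  | (m+1), B, hB => by
    -- the minor deleting row 1 and column 0
    set C : Matrix (Fin (m+1)) (Fin (m+1)) ℝ :=
      B.submatrix ((1 : Fin (m+2)).succAbove) Fin.succ with hC
    have hCentry : ∀ (i j : Fin (m+1)), C i j = B ((1 : Fin (m+2)).succAbove i) j.succ := by
      intro i j; rfl
    have hCclass : IsUpperHessenbergIcc s t C := by
      refine ⟨?_, ?_, ?_⟩
      · intro i j hij
        rw [hCentry]
        apply hB.1
        rw [coe_succAbove_one]
        have : (i:ℕ) ≠ 0 := by omega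
        rw [if_neg this]
        simp [Fin.val_succ]; omega
      · intro i j hij
        rw [hCentry]
        apply hB.2.1
        rw [coe_succAbove_one]
        split <;> simp [Fin.val_succ] <;> omega
      · intro i j hij
        rw [hCentry]
        apply hB.2.2
        rw [coe_succAbove_one]
        split <;> simp [Fin.val_succ] <;> omega
    -- trailing determinants of C agree with those of B
    have htrail : ∀ r : ℕ, r ≤ m → trailDet C r = trailDet B r := by
      intro r hr
      rw [trailDet, trailDet, dif_pos (by omega : r ≤ m+1), dif_pos (by omega : r ≤ m+2)]
      congr 1
      apply Matrix.ext
      intro i j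
      rw [Matrix.of_apply, Matrix.of_apply, hCentry]
      congr 1
      · apply Fin.ext
        rw [coe_succAbove_one]
        have : ¬ ((⟨m + 1 - r + i.1, by omega⟩ : Fin (m+1)) : ℕ) = 0 := by simp; omega
        rw [if_neg this]
        simp; omega
      · apply Fin.ext
        simp [Fin.val_succ]; omega
    have hdetC := det_expand s t C hCclass
    -- expansion along the first column of B
    have h0 : B.det = B 0 0 * trailDet B (m+1) - s * C.det := by
      rw [Matrix.det_succ_column_zero, Fin.sum_univ_succ, Fin.sum_univ_succ]
      have hzero : ∀ i : Fin m,
          (-1:ℝ)^((i.succ.succ : Fin (m+2)) : ℕ) * B i.succ.succ 0 *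
            (B.submatrix (Fin.succAbove i.succ.succ) Fin.succ).det = 0 := by
        intro i
        rw [hB.2.1 i.succ.succ 0 (by simp [Fin.val_succ])]
        ring
      rw [Finset.sum_eq_zero (fun i _ => hzero i)]
      have h1 : trailDet B (m+1) = (B.submatrix ((0 : Fin (m+2)).succAbove) Fin.succ).det := by
        rw [trailDet, dif_pos (by omega : m+1 ≤ m+2)]
        congr 1
        apply Matrix.ext
        intro i j
        rw [Matrix.of_apply, Fin.succAbove_zero, Matrix.submatrix_apply]
        congr 1 <;> apply Fin.ext <;> simp [Fin.val_succ] <;> omega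
      have h2 : B 1 0 = s := hB.1 1 0 (by simp)
      rw [Fin.succ_zero_eq_one, h2, h1]
      simp
      ring
    rw [h0, hdetC,
      Fin.sum_univ_succ (f := fun j : Fin (m+2) => (-s)^(j:ℕ) * B 0 j * trailDet B (m+1 - (j:ℕ)))]
    have hC0 : ∀ j : Fin (m+1), C 0 j = B 0 j.succ := by
      intro j
      rw [hCentry]
      have h00 : (1 : Fin (m+2)).succAbove 0 = 0 := by
        apply Fin.ext
        rw [coe_succAbove_one]
        simp
      rw [h00]
    have htr : ∀ j : Fin (m+1), trailDet C (m - (j:ℕ)) = trailDet B (m - (j:ℕ)) :=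
      fun j => htrail _ (by omega)
    simp only [hC0, htr, Fin.val_succ, Nat.add_sub_add_right, Fin.val_zero, Nat.sub_zero,
      pow_zero, one_mul, pow_succ]
    rw [Finset.mul_sum, sub_eq_add_neg, ← Finset.sum_neg_distrib]
    congr 1
    apply Finset.sum_congr rfl
    intro j _
    ring

lemma trailDet_expand {n : ℕ} (s t : ℝ) (A : Matrix (Fin n) (Fin n) ℝ)
    (hA : IsUpperHessenbergIcc s t A) (q : ℕ) (h : q + 1 ≤ n) :
    trailDet A (q+1) = ∑ j : Fin (q+1),
      (-s)^(j:ℕ) * A ⟨n - (q+1), by omega⟩ ⟨n - (q+1) + (j:ℕ), by omega⟩ * trailDet A (q - (j:ℕ)) := by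
  set T : Matrix (Fin (q+1)) (Fin (q+1)) ℝ :=
    Matrix.of fun i j : Fin (q+1) => A ⟨n - (q+1) + i.1, by omega⟩ ⟨n - (q+1) + j.1, by omega⟩ with hT
  have hTe : ∀ i j : Fin (q+1), T i j = A ⟨n - (q+1) + i.1, by omega⟩ ⟨n - (q+1) + j.1, by omega⟩ :=
    fun i j => rfl
  have h1 : trailDet A (q+1) = T.det := by rw [trailDet, dif_pos h]
  have hTclass : IsUpperHessenbergIcc s t T := by
    refine ⟨?_, ?_, ?_⟩
    · intro i j hij; rw [hTe]; exact hA.1 _ _ (by simp; omega)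
    · intro i j hij; rw [hTe]; exact hA.2.1 _ _ (by simp; omega)
    · intro i j hij; rw [hTe]; exact hA.2.2 _ _ (by simp; omega)
  have h2 : ∀ r : ℕ, r ≤ q → trailDet T r = trailDet A r := by
    intro r hr
    rw [trailDet, trailDet, dif_pos (by omega : r ≤ q+1), dif_pos (by omega : r ≤ n)]
    congr 1
    apply Matrix.ext
    intro i j
    rw [Matrix.of_apply, Matrix.of_apply, hTe]
    congr 1 <;> apply Fin.ext <;> simp <;> omega
  rw [h1, det_expand s t T hTclass]
  apply Finset.sum_congr rfl
  intro j _
  rw [h2 _ (by omega)]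
  have hT0 : T 0 j = A ⟨n - (q+1), by omega⟩ ⟨n - (q+1) + (j:ℕ), by omega⟩ := by
    rw [hTe]
    congr 1
    all_goals apply Fin.ext
    all_goals simp
  rw [hT0]

/-- the pair (α_q, β_q) built from the trailing determinant sequence `d` -/
noncomputable def abSeq (s t : ℝ) (d : ℕ → ℝ) : ℕ → ℝ × ℝ
  | 0 => (t * max (d 0) 0, t * max (-d 0) 0)
  | (q+1) => (t * max (d (q+1)) 0 + s * (abSeq s t d q).2,
              t * max (-(d (q+1))) 0 + s * (abSeq s t d q).1)

lemma abSeq_nonneg (s t : ℝ) (hs : 0 < s) (hst : s ≤ t) (d : ℕ → ℝ) :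
    ∀ q, 0 ≤ (abSeq s t d q).1 ∧ 0 ≤ (abSeq s t d q).2 := by
  intro q
  induction q with
  | zero =>
    constructor <;> exact mul_nonneg (by linarith) (le_max_right _ _)
  | succ q ih =>
    constructor <;>
      exact add_nonneg (mul_nonneg (by linarith) (le_max_right _ _))
        (mul_nonneg hs.le (by tauto))

lemma abSeq_closed (s t : ℝ) (d : ℕ → ℝ) : ∀ q,
    (abSeq s t d q).1
      = ∑ j ∈ Finset.range (q+1), s^j * (t * max ((-1)^j * d (q-j)) 0) ∧
    (abSeq s t d q).2
      = ∑ j ∈ Finset.range (q+1), s^j * (t * max (-((-1)^j * d (q-j))) 0) := by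
  intro q
  induction q with
  | zero => simp [abSeq]
  | succ q ih =>
    rw [Finset.sum_range_succ' (fun j => s^j * (t * max ((-1)^j * d (q+1-j)) 0)) (q+1),
        Finset.sum_range_succ' (fun j => s^j * (t * max (-((-1)^j * d (q+1-j))) 0)) (q+1)]
    simp only [Nat.add_sub_add_right, pow_succ, pow_zero, one_mul, Nat.sub_zero]
    constructor
    · show t * max (d (q+1)) 0 + s * (abSeq s t d q).2 = _
      rw [ih.2, Finset.mul_sum]
      rw [add_comm]
      congr 1
      apply Finset.sum_congr rfl
      intro j _
      have : -((-1:ℝ)^j * d (q-j)) = (-1)^j * -1 * d (q - j) := by ring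
      rw [this]
      ring
    · show t * max (-d (q+1)) 0 + s * (abSeq s t d q).1 = _
      rw [ih.1, Finset.mul_sum]
      rw [add_comm]
      congr 1
      apply Finset.sum_congr rfl
      intro j _
      have hY : -((-1:ℝ)^j * -1 * d (q-j)) = (-1)^j * d (q-j) := by ring
      rw [hY]
      ring

lemma trailDet_bounds {n : ℕ} (s t : ℝ) (hs : 0 < s) (hst : s ≤ t)
    (A : Matrix (Fin n) (Fin n) ℝ) (hA : IsUpperHessenbergIcc s t A)
    (q : ℕ) (h : q + 1 ≤ n) :
    trailDet A (q+1) ≤ (abSeq s t (trailDet A) q).1 ∧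
      -(abSeq s t (trailDet A) q).2 ≤ trailDet A (q+1) := by
  set d := trailDet A with hd
  set c : ℕ → ℝ := (fun j => if hj : j ≤ q then
    A ⟨n - (q+1), by omega⟩ ⟨n - (q+1) + j, by omega⟩ else 0) with hc
  have hcIcc : ∀ j, 0 ≤ c j ∧ c j ≤ t := by
    intro j
    have hce : c j = if hj : j ≤ q then
        A ⟨n - (q+1), by omega⟩ ⟨n - (q+1) + j, by omega⟩ else 0 := rfl
    rw [hce]
    split
    · exact ⟨(hA.2.2 _ _ (by simp)).1, (hA.2.2 _ _ (by simp)).2⟩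
    · exact ⟨le_refl 0, by linarith⟩
  have hsum : d (q+1) = ∑ j ∈ Finset.range (q+1), (-s)^j * c j * d (q-j) := by
    rw [hd, trailDet_expand s t A hA q h,
      ← Fin.sum_univ_eq_sum_range (fun j => (-s)^j * c j * d (q-j)) (q+1)]
    apply Finset.sum_congr rfl
    intro j _
    rw [show c (j:ℕ) = A ⟨n - (q+1), by omega⟩ ⟨n - (q+1) + (j:ℕ), by omega⟩
      from dif_pos (by omega)]
  have key : ∀ j, j < q + 1 →
      ((-s)^j * c j * d (q-j) ≤ s^j * (t * max ((-1)^j * d (q-j)) 0) ∧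
       -(s^j * (t * max (-((-1)^j * d (q-j))) 0)) ≤ (-s)^j * c j * d (q-j)) := by
    intro j hj
    obtain ⟨hc0, hct⟩ := hcIcc j
    have h1 : (-s)^j * c j * d (q-j) = s^j * (c j * ((-1)^j * d (q-j))) := by
      rw [neg_pow]; ring
    have hsj : (0:ℝ) ≤ s^j := pow_nonneg hs.le j
    set x := (-1:ℝ)^j * d (q-j) with hx
    rw [h1]
    constructor
    · apply mul_le_mul_of_nonneg_left _ hsj
      rcases le_or_gt 0 x with hx0 | hx0
      · calc c j * x ≤ t * x := by nlinarith
          _ ≤ t * max x 0 := mul_le_mul_of_nonneg_left (le_max_left _ _) (by linarith)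
      · calc c j * x ≤ 0 := by nlinarith
          _ ≤ t * max x 0 := mul_nonneg (by linarith) (le_max_right _ _)
    · rw [neg_mul_eq_mul_neg]
      apply mul_le_mul_of_nonneg_left _ hsj
      rcases le_or_gt 0 x with hx0 | hx0
      · have hm : max (-x) 0 = 0 := max_eq_right (by linarith)
        rw [hm]
        nlinarith
      · have hm : max (-x) 0 = -x := max_eq_left (by linarith)
        rw [hm]
        nlinarith
  constructor
  · rw [hsum, (abSeq_closed s t d q).1]
    apply Finset.sum_le_sum
    intro j hj
    exact (key j (Finset.mem_range.mp hj)).1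
  · rw [hsum, (abSeq_closed s t d q).2, ← Finset.sum_neg_distrib]
    apply Finset.sum_le_sum
    intro j hj
    exact (key j (Finset.mem_range.mp hj)).2

lemma seqM_pos (s t : ℝ) (hs : 0 < s) (hst : s ≤ t) : ∀ q, 0 < seqM s t q
  | 0 => one_pos
  | 1 => by rw [seqM]; linarith
  | 2 => by rw [seqM]; nlinarith
  | (q+3) => by
    rw [seqM]
    have h1 := seqM_pos s t hs hst (q+2)
    have h2 := seqM_pos s t hs hst (q+1)
    nlinarith

lemma seqM_mono (s t : ℝ) (hs : 0 < s) (hst : s ≤ t) :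
    ∀ q, t * seqM s t q ≤ seqM s t (q+1)
  | 0 => by rw [seqM, seqM]; linarith
  | 1 => by rw [seqM, seqM]; nlinarith
  | (q+2) => by
    rw [show q+2+1 = q+3 from rfl, seqM]
    have h2 := seqM_pos s t hs hst (q+1)
    nlinarith

lemma step_arith (s t α β p m M1 M2 : ℝ) (hs : 0 < s) (hst : s ≤ t)
    (hp0 : 0 ≤ p) (hm0 : 0 ≤ m) (hpm : p = 0 ∨ m = 0) (hpa : p ≤ α) (hmb : m ≤ β)
    (han : 0 ≤ α) (hbn : 0 ≤ β)
    (ha1 : α ≤ M1) (hb1 : β ≤ M1) (hc1 : t*α + s*β ≤ M2) (hd1 : t*β + s*α ≤ M2)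
    (hmono : t * M1 ≤ M2) :
    ((t*p + s*β ≤ M2 ∧ t*m + s*α ≤ M2) ∧
     (t*(t*p + s*β) + s*(t*m + s*α) ≤ t*M2 + s^2*M1 ∧
      t*(t*m + s*α) + s*(t*p + s*β) ≤ t*M2 + s^2*M1)) := by
  have ht0 : (0:ℝ) ≤ t := le_trans hs.le hst
  have hM1 : (0:ℝ) ≤ M1 := le_trans han ha1
  have key : s*M2 + s*t*M1 ≤ t*M2 + s^2*M1 := by
    nlinarith [mul_nonneg (sub_nonneg.mpr hst)
      (sub_nonneg.mpr (le_trans (by nlinarith : s*M1 ≤ t*M1) hmono))]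
  have g1 : t*p + s*β ≤ M2 := by nlinarith [mul_le_mul_of_nonneg_left hpa ht0]
  have g2 : t*m + s*α ≤ M2 := by nlinarith [mul_le_mul_of_nonneg_left hmb ht0]
  refine ⟨⟨g1, g2⟩, ?_, ?_⟩ <;> rcases hpm with hpm | hpm <;> rw [hpm]
  · nlinarith [mul_le_mul_of_nonneg_left hd1 hs.le,
      mul_le_mul_of_nonneg_left hmb (mul_nonneg hs.le ht0),
      mul_le_mul_of_nonneg_left hb1 (mul_nonneg hs.le ht0), key]
  · nlinarith [mul_le_mul_of_nonneg_left hc1 ht0,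
      mul_le_mul_of_nonneg_left hpa (mul_nonneg ht0 ht0),
      mul_le_mul_of_nonneg_left ha1 (mul_nonneg hs.le hs.le)]
  · nlinarith [mul_le_mul_of_nonneg_left hd1 ht0,
      mul_le_mul_of_nonneg_left hmb (mul_nonneg ht0 ht0),
      mul_le_mul_of_nonneg_left hb1 (mul_nonneg hs.le hs.le)]
  · nlinarith [mul_le_mul_of_nonneg_left hc1 hs.le,
      mul_le_mul_of_nonneg_left hpa (mul_nonneg hs.le ht0),
      mul_le_mul_of_nonneg_left ha1 (mul_nonneg hs.le ht0), key]

lemma main_bound (s t : ℝ) (hs : 0 < s) (hst : s ≤ t) (d : ℕ → ℝ) (hd0 : d 0 = 1) (n : ℕ)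
    (hb : ∀ q, q + 1 ≤ n → d (q+1) ≤ (abSeq s t d q).1 ∧ -(abSeq s t d q).2 ≤ d (q+1)) :
    ∀ q, q + 1 ≤ n →
      ((abSeq s t d q).1 ≤ seqM s t (q+1) ∧ (abSeq s t d q).2 ≤ seqM s t (q+1)) ∧
      (t * (abSeq s t d q).1 + s * (abSeq s t d q).2 ≤ seqM s t (q+2) ∧
       t * (abSeq s t d q).2 + s * (abSeq s t d q).1 ≤ seqM s t (q+2)) := by
  intro q
  induction q with
  | zero =>
    intro _
    have e1 : (abSeq s t d 0).1 = t := by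
      show t * max (d 0) 0 = t
      rw [hd0, max_eq_left one_pos.le, mul_one]
    have e2 : (abSeq s t d 0).2 = 0 := by
      show t * max (-d 0) 0 = 0
      rw [hd0, max_eq_right (by linarith), mul_zero]
    rw [e1, e2]
    rw [show seqM s t 1 = t from rfl, show seqM s t 2 = t^2 from rfl]
    refine ⟨⟨le_refl t, by linarith⟩, by nlinarith, by nlinarith⟩
  | succ q ih =>
    intro hq2
    obtain ⟨⟨ha1, hb1⟩, hc1, hd1⟩ := ih (by omega)
    obtain ⟨hdub, hdlb⟩ := hb q (by omega)
    obtain ⟨han, hbn⟩ := abSeq_nonneg s t hs hst d q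
    have hmono : t * seqM s t (q+1) ≤ seqM s t (q+2) := seqM_mono s t hs hst (q+1)
    have hpm : max (d (q+1)) 0 = 0 ∨ max (-(d (q+1))) 0 = 0 := by
      rcases le_or_gt 0 (d (q+1)) with h0 | h0
      · exact Or.inr (max_eq_right (by linarith))
      · exact Or.inl (max_eq_right (by linarith))
    have H := step_arith s t (abSeq s t d q).1 (abSeq s t d q).2
      (max (d (q+1)) 0) (max (-(d (q+1))) 0)
      (seqM s t (q+1)) (seqM s t (q+2)) hs hst
      (le_max_right _ _) (le_max_right _ _) hpm
      (max_le hdub han) (max_le (by linarith) hbn)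
      han hbn ha1 hb1 hc1 hd1 hmono
    have ea : (abSeq s t d (q+1)).1 = t * max (d (q+1)) 0 + s * (abSeq s t d q).2 := rfl
    have eb : (abSeq s t d (q+1)).2 = t * max (-(d (q+1))) 0 + s * (abSeq s t d q).1 := rfl
    have em2 : seqM s t (q+1+1) = seqM s t (q+2) := rfl
    have em3 : seqM s t (q+1+2) = t * seqM s t (q+2) + s^2 * seqM s t (q+1) := rfl
    rw [ea, eb, em2, em3]
    exact ⟨⟨H.1.1, H.1.2⟩, H.2.1, H.2.2⟩

lemma abs_det_le {n : ℕ} (s t : ℝ) (hs : 0 < s) (hst : s ≤ t) (hn : 1 ≤ n)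
    (A : Matrix (Fin n) (Fin n) ℝ) (hA : IsUpperHessenbergIcc s t A) :
    |A.det| ≤ seqM s t n := by
  obtain ⟨q, rfl⟩ : ∃ q, n = q + 1 := ⟨n - 1, by omega⟩
  have hb : ∀ r, r + 1 ≤ q + 1 → trailDet A (r+1) ≤ (abSeq s t (trailDet A) r).1 ∧
      -(abSeq s t (trailDet A) r).2 ≤ trailDet A (r+1) :=
    fun r hr => trailDet_bounds s t hs hst A hA r hr
  have hmain := main_bound s t hs hst (trailDet A) (trailDet_zero A) (q+1) hb q (le_refl _)
  obtain ⟨hq1, hq2⟩ := hb q (le_refl _)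
  rw [trailDet_self] at hq1 hq2
  apply abs_le.mpr
  constructor
  · have := hmain.1.2
    linarith
  · have := hmain.1.1
    linarith

/-- the checkerboard extremal matrix -/
noncomputable def cbMat (s t : ℝ) (n : ℕ) : Matrix (Fin n) (Fin n) ℝ :=
  Matrix.of fun i j : Fin n =>
    if (i:ℕ) = (j:ℕ) + 1 then s
    else if (i:ℕ) ≤ (j:ℕ) ∧ ((j:ℕ) - (i:ℕ)) % 2 = 0 then t else 0

lemma cbMat_class (s t : ℝ) (hs : 0 < s) (hst : s ≤ t) (n : ℕ) :
    IsUpperHessenbergIcc s t (cbMat s t n) := by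
  refine ⟨?_, ?_, ?_⟩
  · intro i j hij
    rw [cbMat, Matrix.of_apply, if_pos hij]
  · intro i j hij
    rw [cbMat, Matrix.of_apply, if_neg (by omega), if_neg (by omega)]
  · intro i j hij
    rw [cbMat, Matrix.of_apply, if_neg (by omega)]
    split
    · exact ⟨le_trans hs.le hst, le_refl t⟩
    · exact ⟨le_refl 0, le_trans hs.le hst⟩

/-- key summation identity for `seqM` -/
lemma seqM_sum (s t : ℝ) : ∀ q : ℕ,
    ∑ j ∈ Finset.range (q+1), (if j % 2 = 0 then s^j * t * seqM s t (q - j) else 0)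
      = seqM s t (q+1)
  | 0 => by simp [seqM]
  | 1 => by
    rw [Finset.sum_range_succ, Finset.sum_range_one]
    norm_num
    rw [show seqM s t 1 = t from rfl, show seqM s t 2 = t^2 from rfl]
    ring
  | (q+2) => by
    have IH := seqM_sum s t q
    rw [Finset.sum_range_succ' (fun j => if j % 2 = 0 then s^j * t * seqM s t (q+2 - j) else 0) (q+2),
        Finset.sum_range_succ' (fun j => if (j+1) % 2 = 0 then s^(j+1) * t * seqM s t (q+2 - (j+1)) else 0) (q+1)]
    have e0 : (if (0:ℕ) % 2 = 0 then s^0 * t * seqM s t (q+2-0) else 0) = t * seqM s t (q+2) := by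
      norm_num
    have e1 : (if (0+1) % 2 = 0 then s^(0+1) * t * seqM s t (q+2-(0+1)) else 0) = 0 := by
      norm_num
    rw [e0, e1]
    have e2 : ∀ j, (if (j+1+1) % 2 = 0 then s^(j+1+1) * t * seqM s t (q+2-(j+1+1)) else 0)
        = s^2 * (if j % 2 = 0 then s^j * t * seqM s t (q - j) else 0) := by
      intro j
      have hmod : (j+1+1) % 2 = j % 2 := by omega
      have harg : q + 2 - (j+1+1) = q - j := by omega
      rw [hmod, harg]
      split
      · ring
      · ring
    calc ∑ j ∈ Finset.range (q+1),
          (if (j+1+1) % 2 = 0 then s^(j+1+1) * t * seqM s t (q+2-(j+1+1)) else 0) + 0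
            + t * seqM s t (q+2)
        = ∑ j ∈ Finset.range (q+1),
            s^2 * (if j % 2 = 0 then s^j * t * seqM s t (q - j) else 0) + 0
            + t * seqM s t (q+2) := by rw [Finset.sum_congr rfl (fun j _ => e2 j)]
      _ = s^2 * seqM s t (q+1) + 0 + t * seqM s t (q+2) := by rw [← Finset.mul_sum, IH]
      _ = seqM s t (q+3) := by rw [show seqM s t (q+3) = t * seqM s t (q+2) + s^2 * seqM s t (q+1) from rfl]; ring

lemma cbMat_trailDet (s t : ℝ) (hs : 0 < s) (hst : s ≤ t) (n : ℕ) :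
    ∀ q, q ≤ n → trailDet (cbMat s t n) q = seqM s t q := by
  intro q
  induction q using Nat.strong_induction_on with
  | _ q IH =>
    intro hq
    match q with
    | 0 => rw [trailDet_zero]; rfl
    | (r+1) =>
      rw [trailDet_expand s t _ (cbMat_class s t hs hst n) r hq]
      have hterm : ∀ j : Fin (r+1),
          (-s)^(j:ℕ) * cbMat s t n ⟨n - (r+1), by omega⟩ ⟨n - (r+1) + (j:ℕ), by omega⟩
            * trailDet (cbMat s t n) (r - (j:ℕ))
          = (if (j:ℕ) % 2 = 0 then s^(j:ℕ) * t * seqM s t (r - (j:ℕ)) else 0) := by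
        intro j
        have hIH : trailDet (cbMat s t n) (r - (j:ℕ)) = seqM s t (r - (j:ℕ)) :=
          IH _ (by omega) (by omega)
        rw [hIH]
        rw [cbMat, Matrix.of_apply]
        rw [if_neg (by simp; omega)]
        by_cases hpar : (j:ℕ) % 2 = 0
        · rw [if_pos (by simp; omega), if_pos hpar]
          have hev : (-s)^(j:ℕ) = s^(j:ℕ) := Even.neg_pow (Nat.even_iff.mpr hpar) s
          rw [hev]
        · rw [if_neg (by simp; omega), if_neg hpar]
          ring
      calc (∑ j : Fin (r+1), (-s)^(j:ℕ)
              * cbMat s t n ⟨n - (r+1), by omega⟩ ⟨n - (r+1) + (j:ℕ), by omega⟩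
              * trailDet (cbMat s t n) (r - (j:ℕ)))
          = ∑ j : Fin (r+1),
              (if (j:ℕ) % 2 = 0 then s^(j:ℕ) * t * seqM s t (r - (j:ℕ)) else 0) :=
            Finset.sum_congr rfl (fun j _ => hterm j)
        _ = ∑ j ∈ Finset.range (r+1),
              (if j % 2 = 0 then s^j * t * seqM s t (r - j) else 0) :=
            Fin.sum_univ_eq_sum_range
              (fun j : ℕ => if j % 2 = 0 then s^j * t * seqM s t (r - j) else 0) (r+1)
        _ = seqM s t (r+1) := seqM_sum s t r
end HessAux

theorem max_abs_det_case_I (s t : ℝ) (hs : 0 < s) (hst : s ≤ t) :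
    ∀ n : ℕ, 1 ≤ n →
      IsGreatest {x : ℝ | ∃ A : Matrix (Fin n) (Fin n) ℝ,
        IsUpperHessenbergIcc s t A ∧ x = |A.det|} (seqM s t n) := by
  intro n hn
  constructor
  · refine ⟨HessAux.cbMat s t n, HessAux.cbMat_class s t hs hst n, ?_⟩
    have h1 : (HessAux.cbMat s t n).det = seqM s t n := by
      rw [← HessAux.trailDet_self]
      exact HessAux.cbMat_trailDet s t hs hst n n le_rfl
    rw [h1, abs_of_nonneg (HessAux.seqM_pos s t hs hst n).le]
  · rintro x ⟨A, hA, rfl⟩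
    exact HessAux.abs_det_le s t hs hst hn A hA
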